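/- Let G be a finite directed graph (no self-loops, no parallel arcs) on vertex set V. If every induced subgraph of G on 3 vertices contains a directed cycle, then every induced subgraph of G on 4 vertices contains a pair of vertices i ≠ j with both arcs (i→j) and (j→i) present. -/

import Mathlib

/-- There is a directed cycle of `A` all of whose vertices lie in `S`. -/
def HasCycleIn {V : Type} (A : V → V → Prop) (S : Set V) : Prop :=
  ∃ (v : V) (l : List V), (v :: l).Nodup ∧ (∀ x ∈ v :: l, x ∈ S) ∧
    List.Chain A v (l ++ [v])

lemma cycle_classify {V : Type} [DecidableEq V] (A : V → V → Prop) (hirr : ∀ i, ¬ A i i)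
    (a b c : V) (hab : a ≠ b) (hac : a ≠ c) (hbc : b ≠ c)
    (h : HasCycleIn A (↑({a,b,c} : Finset V)))
    (hne : ∀ i ∈ ({a,b,c} : Finset V), ∀ j ∈ ({a,b,c} : Finset V), i ≠ j → ¬ (A i j ∧ A j i)) :
    (A a b ∧ A b c ∧ A c a) ∨ (A a c ∧ A c b ∧ A b a) := by
  obtain ⟨v, l, hnd, hmem, hch⟩ := h
  have hmem' : ∀ x ∈ v :: l, x = a ∨ x = b ∨ x = c := by
    intro x hx
    have := hmem x hx
    simpa using this
  match l with
  | [] =>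
    simp [List.Chain] at hch
    exact absurd hch (hirr v)
  | [x] =>
    simp [List.Chain, List.isChain_cons_cons] at hch
    have hvx : v ≠ x := by simp at hnd; tauto
    exact absurd ⟨hch.1, hch.2⟩
      (hne v (by simpa using hmem v (by simp)) x (by simpa using hmem x (by simp)) hvx)
  | [x, y] =>
    simp [List.chain_cons] at hch
    obtain ⟨h1, h2, h3⟩ := hch
    have hv := hmem' v (by simp)
    have hx := hmem' x (by simp)
    have hy := hmem' y (by simp)
    have hvx : v ≠ x := by simp at hnd; tauto
    have hvy : v ≠ y := by simp at hnd; tauto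
    have hxy : x ≠ y := by simp at hnd; tauto
    rcases hv with rfl|rfl|rfl <;> rcases hx with rfl|rfl|rfl <;>
      rcases hy with rfl|rfl|rfl <;> simp_all <;> tauto
  | x :: y :: z :: t =>
    exfalso
    have h4 : (v :: x :: y :: z :: t).toFinset.card = (v :: x :: y :: z :: t).length :=
      List.toFinset_card_of_nodup hnd
    have hsub : (v :: x :: y :: z :: t).toFinset ⊆ {a, b, c} := by
      intro u hu
      simp only [List.mem_toFinset] at hu
      have := hmem' u hu
      simp [Finset.mem_insert]
      tauto
    have h5 := Finset.card_le_card hsub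
    rw [h4] at h5
    have h6 : ({a,b,c} : Finset V).card ≤ 3 :=
      (Finset.card_insert_le _ _).trans (Nat.succ_le_succ
        ((Finset.card_insert_le _ _).trans (Nat.succ_le_succ (Finset.card_singleton _).le)))
    simp only [List.length_cons] at h5
    omega

/-- If every induced subgraph of a finite directed graph (no self-loops) on 3 vertices
contains a directed cycle, then every induced subgraph on 4 vertices contains a pair
of vertices joined by arcs in both directions. -/
theorem four_vertices_contain_edge {V : Type} [Fintype V] [DecidableEq V]
    (A : V → V → Prop) (hirr : ∀ i, ¬ A i i)
    (h3 : ∀ S : Finset V, S.card = 3 → HasCycleIn A ↑S) :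
    ∀ S : Finset V, S.card = 4 →
      ∃ i ∈ S, ∃ j ∈ S, i ≠ j ∧ A i j ∧ A j i := by
  intro S hS
  by_contra hne
  push_neg at hne
  -- extract four distinct elements
  obtain ⟨a, t, hat, rfl, ht3⟩ := Finset.card_eq_succ.mp hS
  obtain ⟨b, c, d, hbc, hbd, hcd, rfl⟩ := Finset.card_eq_three.mp ht3
  have hab : a ≠ b := by intro h; subst h; simp at hat
  have hac : a ≠ c := by intro h; subst h; simp at hat
  have had : a ≠ d := by intro h; subst h; simp at hat
  have haS : a ∈ insert a ({b,c,d} : Finset V) := by simp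
  have hbS : b ∈ insert a ({b,c,d} : Finset V) := by simp
  have hcS : c ∈ insert a ({b,c,d} : Finset V) := by simp
  have hdS : d ∈ insert a ({b,c,d} : Finset V) := by simp
  have key : ∀ x y z : V, x ≠ y → x ≠ z → y ≠ z →
      x ∈ insert a ({b,c,d} : Finset V) → y ∈ insert a ({b,c,d} : Finset V) →
      z ∈ insert a ({b,c,d} : Finset V) →
      (A x y ∧ A y z ∧ A z x) ∨ (A x z ∧ A z y ∧ A y x) := by
    intro x y z hxy hxz hyz hx hy hz
    apply cycle_classify A hirr x y z hxy hxz hyz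
    · exact h3 _ (Finset.card_eq_three.mpr ⟨x, y, z, hxy, hxz, hyz, rfl⟩)
    · intro i hi j hj hij
      have hi' : i ∈ insert a ({b,c,d} : Finset V) := by
        simp at hi; rcases hi with rfl|rfl|rfl <;> assumption
      have hj' : j ∈ insert a ({b,c,d} : Finset V) := by
        simp at hj; rcases hj with rfl|rfl|rfl <;> assumption
      intro hA
      exact (hne i hi' j hj' hij hA.1) hA.2
  rcases key a b c hab hac hbc haS hbS hcS with ⟨h1, h2, h0⟩ | ⟨h1, h2, h0⟩
  · rcases key a b d hab had hbd haS hbS hdS with ⟨_, h4, h5⟩ | ⟨_, _, h6⟩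
    · rcases key b c d hbc hbd hcd hbS hcS hdS with ⟨_, _, h7⟩ | ⟨_, h8, h9⟩
      · exact (hne b hbS d hdS hbd h4 h7).elim
      · exact (hne b hbS c hcS hbc h2 h9).elim
    · exact (hne a haS b hbS hab h1 h6).elim
  · rcases key a c d hac had hcd haS hcS hdS with ⟨_, h4, h5⟩ | ⟨_, _, h6⟩
    · rcases key c b d hbc.symm hcd hbd hcS hbS hdS with ⟨h7, _, h9⟩ | ⟨h7, _, h9⟩
      · exact (hne c hcS d hdS hcd h4 h9).elim
      · exact (hne b hbS c hcS hbc h9 h2).elim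
    · exact (hne a haS c hcS hac h1 h6).elim
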